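/- Suppose D is a closed subset of [0,1]² whose interior D° is nonempty and connected and which satisfies D = closure(D°). Then either ent(D) = 0 or ent(D) = ∞. -/

import Mathlib

open Set Filter Topology unitInterval
open scoped Classical

noncomputable section

/-- The shift map on sequences in the unit interval. -/
def shiftMap (x : ℕ → unitInterval) : ℕ → unitInterval := fun n => x (n + 1)

/-- The `m`-fold Mahavier product `⋆_{i=1}^m G` of a set `G ⊆ [0,1]²`. -/
def MahavierFin (G : Set (unitInterval × unitInterval)) (m : ℕ) :
    Set (Fin (m + 1) → unitInterval) :=
  {x | ∀ i : Fin m, (x i.castSucc, x i.succ) ∈ G}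

/-- The infinite Mahavier product `⋆_{i=1}^∞ G` of a set `G ⊆ [0,1]²`. -/
def MahavierInf (G : Set (unitInterval × unitInterval)) : Set (ℕ → unitInterval) :=
  {x | ∀ i : ℕ, (x i, x (i + 1)) ∈ G}

/-- The `m`-fold Mahavier product of `H ⊆ [0,1]^{N+1}`, a subset of `[0,1]^{mN+1}`. -/
def MahavierFinN (N : ℕ) (H : Set (Fin (N + 1) → unitInterval)) (m : ℕ) :
    Set (Fin (m * N + 1) → unitInterval) :=
  {x | ∀ j : Fin m, (fun i : Fin (N + 1) =>
      x ⟨j.1 * N + i.1, by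
        have hi : i.1 ≤ N := Nat.lt_succ_iff.mp i.2
        have hj : j.1 + 1 ≤ m := j.2
        have h : (j.1 + 1) * N ≤ m * N := Nat.mul_le_mul_right N hj
        have h2 : (j.1 + 1) * N = j.1 * N + N := by ring
        omega⟩) ∈ H}

/-- The infinite Mahavier product of `H ⊆ [0,1]^{N+1}`. -/
def MahavierInfN (N : ℕ) (H : Set (Fin (N + 1) → unitInterval)) :
    Set (ℕ → unitInterval) :=
  {x | ∀ j : ℕ, (fun i : Fin (N + 1) => x (j * N + i.1)) ∈ H}

/-- The least cardinality of a subcollection of `U` covering `K`. -/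
def coverNum {X : Type*} (K : Set X) (U : Set (Set X)) : ℕ :=
  sInf {n | ∃ F : Finset (Set X), ↑F ⊆ U ∧ F.card = n ∧ K ⊆ ⋃₀ ↑F}

/-- `α` is a minimal finite cover of `[0,1]` by open intervals: every member is open in
`[0,1]` and order-connected (an interval), `α` covers `[0,1]`, and no proper
subcollection of `α` covers `[0,1]`. -/
def IsMinimalIntervalCover (α : Finset (Set unitInterval)) : Prop :=
  (∀ u ∈ α, IsOpen u ∧ u.OrdConnected) ∧
  (⋃₀ (α : Set (Set unitInterval)) = Set.univ) ∧
  ∀ β : Finset (Set unitInterval), β ⊆ α →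
    ⋃₀ (β : Set (Set unitInterval)) = Set.univ → β = α

/-- The grid cover `α^k` of `[0,1]^k`: all products of `k` members of `α`. -/
def gridCover (α : Finset (Set unitInterval)) (k : ℕ) :
    Set (Set (Fin k → unitInterval)) :=
  {s | ∃ f : Fin k → Set unitInterval, (∀ i, f i ∈ α) ∧ s = {x | ∀ i, x i ∈ f i}}

/-- Entropy of `G ⊆ [0,1]²` relative to the cover `α`: the limit (realized as a `limsup`)
of `(1/m) log N(⋆_{i=1}^m G, α^{m+1})` if `⋆_{i=1}^∞ G ≠ ∅`, and `0` otherwise. -/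
def entOf (G : Set (unitInterval × unitInterval))
    (α : Finset (Set unitInterval)) : ENNReal :=
  if (MahavierInf G).Nonempty then
    Filter.limsup (fun m : ℕ =>
      ENNReal.ofReal
        (Real.log (coverNum (MahavierFin G m) (gridCover α (m + 1))) / m))
      Filter.atTop
  else 0

/-- Topological entropy of `G ⊆ [0,1]²`: the supremum of `entOf G α` over all minimal
open interval covers `α` of `[0,1]`. -/
def ent (G : Set (unitInterval × unitInterval)) : ENNReal :=
  ⨆ α : {α : Finset (Set unitInterval) // IsMinimalIntervalCover α}, entOf G α.1

/-- Entropy of `H ⊆ [0,1]^{N+1}` relative to the cover `α`. -/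
def entOfN (N : ℕ) (H : Set (Fin (N + 1) → unitInterval))
    (α : Finset (Set unitInterval)) : ENNReal :=
  if (MahavierInfN N H).Nonempty then
    Filter.limsup (fun m : ℕ =>
      ENNReal.ofReal
        (Real.log (coverNum (MahavierFinN N H m) (gridCover α (m * N + 1))) / m))
      Filter.atTop
  else 0

/-- Topological entropy of `H ⊆ [0,1]^{N+1}`. -/
def entN (N : ℕ) (H : Set (Fin (N + 1) → unitInterval)) : ENNReal :=
  ⨆ α : {α : Finset (Set unitInterval) // IsMinimalIntervalCover α}, entOfN N H α.1

/-- An open cover of a topological space. -/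
def IsOpenCover {X : Type*} [TopologicalSpace X] (U : Set (Set X)) : Prop :=
  (∀ u ∈ U, IsOpen u) ∧ ⋃₀ U = Set.univ

/-- The join `U ∨ T⁻¹U ∨ ⋯ ∨ T⁻ⁿU` of the open cover `U` under the map `T`. -/
def dynJoin {X : Type*} (T : X → X) (U : Set (Set X)) (n : ℕ) : Set (Set X) :=
  {s | ∃ f : Fin (n + 1) → Set X, (∀ i, f i ∈ U) ∧ s = ⋂ i, T^[i.1] ⁻¹' f i}

/-- The Adler–Konheim–McAndrew topological entropy of `T : X → X`: the supremum over all
open covers `U` of `X` of `lim (1/n) log N(X, U ∨ T⁻¹U ∨ ⋯ ∨ T⁻ⁿU)` (as a `limsup`). -/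
def akmEntropy {X : Type*} [TopologicalSpace X] (T : X → X) : ENNReal :=
  ⨆ U : {U : Set (Set X) // IsOpenCover U},
    Filter.limsup (fun n : ℕ =>
      ENNReal.ofReal (Real.log (coverNum Set.univ (dynJoin T U.1 n)) / n))
      Filter.atTop


/-! ### Auxiliary lemmas -/

/-- Each member of a minimal cover has a witness point belonging to no other member. -/
lemma witness_exists {α : Finset (Set unitInterval)} (hα : IsMinimalIntervalCover α)
    {u : Set unitInterval} (hu : u ∈ α) :
    ∃ p : unitInterval, p ∈ u ∧ ∀ v ∈ α, p ∈ v → v = u := by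
  have hne : ⋃₀ ((α.erase u : Finset (Set unitInterval)) : Set (Set unitInterval))
      ≠ Set.univ := by
    intro h
    have h2 := hα.2.2 (α.erase u) (Finset.erase_subset _ _) h
    exact Finset.notMem_erase u α (by rw [h2]; exact hu)
  obtain ⟨x, hx⟩ : ∃ x : unitInterval,
      x ∉ ⋃₀ ((α.erase u : Finset (Set unitInterval)) : Set (Set unitInterval)) := by
    by_contra h
    push_neg at h
    exact hne (Set.eq_univ_of_forall h)
  refine ⟨x, ?_, ?_⟩
  · have hxu : x ∈ ⋃₀ (α : Set (Set unitInterval)) := hα.2.1 ▸ Set.mem_univ x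
    obtain ⟨v, hv, hxv⟩ := hxu
    rcases eq_or_ne v u with rfl | hvu
    · exact hxv
    · exact absurd ⟨v, Finset.mem_coe.mpr (Finset.mem_erase.mpr ⟨hvu, Finset.mem_coe.mp hv⟩), hxv⟩ hx
  · intro v hv hxv
    by_contra hvu
    exact hx ⟨v, Finset.mem_coe.mpr (Finset.mem_erase.mpr ⟨hvu, hv⟩), hxv⟩

/-- Cover number bound for sets of monotone (or antitone) tuples. -/
lemma coverNum_le_of_mono {α : Finset (Set unitInterval)} (hα : IsMinimalIntervalCover α)
    (m : ℕ) (K : Set (Fin (m + 1) → unitInterval))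
    (hK : (∀ x ∈ K, Monotone x) ∨ (∀ x ∈ K, Antitone x)) :
    coverNum K (gridCover α (m + 1)) ≤ (m + 2) ^ α.card := by
  classical
  -- witness points
  have hwit : ∀ u : {u : Set unitInterval // u ∈ α},
      ∃ p : unitInterval, p ∈ u.1 ∧ ∀ v ∈ α, p ∈ v → v = u.1 :=
    fun u => witness_exists hα u.2
  choose p hp1 hp2 using hwit
  have hpinj : Function.Injective p := by
    intro u v huv
    ext1
    exact hp2 v u.1 u.2 (huv ▸ hp1 u)
  -- maximal selection
  have hselE : ∀ x : unitInterval, ∃ u : {u : Set unitInterval // u ∈ α},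
      x ∈ u.1 ∧ ∀ v : {u : Set unitInterval // u ∈ α}, x ∈ v.1 → p v ≤ p u := by
    intro x
    have hx : x ∈ ⋃₀ (α : Set (Set unitInterval)) := hα.2.1 ▸ Set.mem_univ x
    obtain ⟨w, hw, hxw⟩ := hx
    have hne : (Finset.univ.filter
        (fun u : {u : Set unitInterval // u ∈ α} => x ∈ u.1)).Nonempty :=
      ⟨⟨w, Finset.mem_coe.mp hw⟩, by simp [hxw]⟩
    obtain ⟨b, hb, hbmax⟩ := Finset.exists_max_image _ p hne
    simp only [Finset.mem_filter, Finset.mem_univ, true_and] at hb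
    exact ⟨b, hb, fun v hv => hbmax v (by simp [hv])⟩
  choose sel hsel1 hsel2 using hselE
  -- monotonicity of the selection
  have hmono : ∀ x y : unitInterval, x ≤ y → p (sel x) ≤ p (sel y) := by
    intro x y hxy
    by_contra hcon
    push_neg at hcon
    rcases le_total y (p (sel x)) with h | h
    · -- y ∈ (sel x).1
      have hy : y ∈ (sel x).1 :=
        ((hα.1 _ (sel x).2).2.out (hsel1 x) (hp1 (sel x))) ⟨hxy, h⟩
      exact absurd (hsel2 y (sel x) hy) (not_le.mpr hcon)
    · -- p (sel x) ∈ (sel y).1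
      have hpx : p (sel x) ∈ (sel y).1 :=
        ((hα.1 _ (sel y).2).2.out (hp1 (sel y)) (hsel1 y)) ⟨hcon.le, h⟩
      have : (sel y).1 = (sel x).1 := hp2 (sel x) (sel y).1 (sel y).2 hpx
      have : sel y = sel x := Subtype.ext this
      rw [this] at hcon
      exact lt_irrefl _ hcon
  -- the monotone words
  set M : Finset (Fin (m + 1) → {u : Set unitInterval // u ∈ α}) :=
    Finset.univ.filter (fun f => Monotone (fun i => p (f i))) with hM
  -- counting function
  set cnt : (Fin (m + 1) → {u : Set unitInterval // u ∈ α})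
      → {u : Set unitInterval // u ∈ α} → ℕ :=
    fun f u => (Finset.univ.filter (fun i => p (f i) ≤ p u)).card with hcnt
  have hcnt_lt : ∀ f u, cnt f u < m + 2 := by
    intro f u
    calc cnt f u ≤ (Finset.univ : Finset (Fin (m + 1))).card := Finset.card_filter_le _ _
    _ = m + 1 := by simp
    _ < m + 2 := Nat.lt_succ_self _
  -- lower-set characterization
  have hlower : ∀ f : Fin (m + 1) → {u : Set unitInterval // u ∈ α},
      Monotone (fun i => p (f i)) →
      ∀ (i : Fin (m + 1)) (u : {u : Set unitInterval // u ∈ α}),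
        (p (f i) ≤ p u ↔ (i : ℕ) < cnt f u) := by
    intro f hf i u
    constructor
    · intro h
      have hsub : Finset.Iic i ⊆ Finset.univ.filter (fun j => p (f j) ≤ p u) := by
        intro j hj
        simp only [Finset.mem_filter, Finset.mem_univ, true_and]
        exact le_trans (hf (Finset.mem_Iic.mp hj)) h
      have h2 := Finset.card_le_card hsub
      rw [Fin.card_Iic] at h2
      simp only [hcnt]
      omega
    · intro h
      by_contra hcon
      have hsub : Finset.univ.filter (fun j => p (f j) ≤ p u) ⊆ Finset.Iio i := by
        intro j hj
        simp only [Finset.mem_filter, Finset.mem_univ, true_and] at hj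
        rw [Finset.mem_Iio]
        by_contra hji
        exact hcon (le_trans (hf (not_lt.mp hji)) hj)
      have h2 := Finset.card_le_card hsub
      rw [Fin.card_Iio] at h2
      simp only [hcnt] at h
      omega
  -- injectivity of counting on monotone words
  have hinj : ∀ f ∈ M, ∀ g ∈ M, cnt f = cnt g → f = g := by
    intro f hf g hg hfg
    rw [hM, Finset.mem_filter] at hf hg
    funext i
    have h1 : p (f i) ≤ p (g i) := by
      rw [hlower f hf.2 i (g i), hfg, ← hlower g hg.2 i (g i)]
    have h2 : p (g i) ≤ p (f i) := by
      rw [hlower g hg.2 i (f i), ← hfg, ← hlower f hf.2 i (f i)]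
    exact hpinj (le_antisymm h1 h2)
  -- cardinality of monotone words
  have hMcard : M.card ≤ (m + 2) ^ α.card := by
    have h1 : M.card ≤ Fintype.card ({u : Set unitInterval // u ∈ α} → Fin (m + 2)) := by
      apply Finset.card_le_card_of_injOn
        (fun f => (fun u => (⟨cnt f u, hcnt_lt f u⟩ : Fin (m + 2))))
      · intro f _; exact Finset.mem_univ _
      · intro f hf g hg hfg
        apply hinj f hf g hg
        funext u
        have h3 := congrFun hfg u
        simpa using congrArg Fin.val h3
    calc M.card ≤ Fintype.card ({u : Set unitInterval // u ∈ α} → Fin (m + 2)) := h1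
    _ = (m + 2) ^ α.card := by
        rw [Fintype.card_fun]
        simp [Fintype.card_coe]
  -- antitone words
  set M' : Finset (Fin (m + 1) → {u : Set unitInterval // u ∈ α}) :=
    Finset.univ.filter (fun f => Antitone (fun i => p (f i))) with hM'
  have hM'card : M'.card ≤ (m + 2) ^ α.card := by
    have h1 : M'.card ≤ M.card := by
      apply Finset.card_le_card_of_injOn (fun f => f ∘ Fin.rev)
      · intro f hf
        simp only [hM', Finset.mem_coe, Finset.mem_filter] at hf
        rw [Finset.mem_coe, hM, Finset.mem_filter]
        refine ⟨Finset.mem_univ _, ?_⟩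
        intro i j hij
        exact hf.2 (Fin.rev_le_rev.mpr hij)
      · intro f _ g _ hfg
        funext i
        have h2 := congrFun hfg i.rev
        simpa [Fin.rev_rev] using h2
    exact le_trans h1 hMcard
  obtain hKm | hKa := hK
  · -- monotone case
    have hcov : K ⊆ ⋃₀ ↑(M.image
        (fun f => {y : Fin (m + 1) → unitInterval | ∀ i, y i ∈ (f i).1})) := by
      intro x hx
      refine ⟨{y : Fin (m + 1) → unitInterval | ∀ i, y i ∈ (sel (x i)).1},
        ?_, fun i => hsel1 (x i)⟩
      simp only [Finset.coe_image, Set.mem_image, Finset.mem_coe]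
      refine ⟨fun i => sel (x i), ?_, rfl⟩
      rw [hM, Finset.mem_filter]
      exact ⟨Finset.mem_univ _, fun i j hij => hmono _ _ (hKm x hx hij)⟩
    have hsub : ↑(M.image
        (fun f => {y : Fin (m + 1) → unitInterval | ∀ i, y i ∈ (f i).1}))
        ⊆ gridCover α (m + 1) := by
      intro s hs
      simp only [Finset.coe_image, Set.mem_image, Finset.mem_coe] at hs
      obtain ⟨f, _, rfl⟩ := hs
      exact ⟨fun i => (f i).1, fun i => (f i).2, rfl⟩
    exact le_trans (Nat.sInf_le ⟨_, hsub, rfl, hcov⟩)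
      (le_trans Finset.card_image_le hMcard)
  · -- antitone case
    have hcov : K ⊆ ⋃₀ ↑(M'.image
        (fun f => {y : Fin (m + 1) → unitInterval | ∀ i, y i ∈ (f i).1})) := by
      intro x hx
      refine ⟨{y : Fin (m + 1) → unitInterval | ∀ i, y i ∈ (sel (x i)).1},
        ?_, fun i => hsel1 (x i)⟩
      simp only [Finset.coe_image, Set.mem_image, Finset.mem_coe]
      refine ⟨fun i => sel (x i), ?_, rfl⟩
      rw [hM', Finset.mem_filter]
      exact ⟨Finset.mem_univ _, fun i j hij => hmono _ _ (hKa x hx hij)⟩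
    have hsub : ↑(M'.image
        (fun f => {y : Fin (m + 1) → unitInterval | ∀ i, y i ∈ (f i).1}))
        ⊆ gridCover α (m + 1) := by
      intro s hs
      simp only [Finset.coe_image, Set.mem_image, Finset.mem_coe] at hs
      obtain ⟨f, _, rfl⟩ := hs
      exact ⟨fun i => (f i).1, fun i => (f i).2, rfl⟩
    exact le_trans (Nat.sInf_le ⟨_, hsub, rfl, hcov⟩)
      (le_trans Finset.card_image_le hM'card)

/-- The limit `log(m+2)/m → 0`. -/
lemma tendsto_log_add_two_div : Tendsto (fun m : ℕ => Real.log ((m : ℝ) + 2) / m) atTop (𝓝 0) := by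
  have hlog : Tendsto (fun x : ℝ => Real.log x / x) atTop (𝓝 0) := by
    simpa using Real.tendsto_pow_log_div_mul_add_atTop 1 0 1 one_ne_zero
  have h2 : Tendsto (fun m : ℕ => ((m : ℝ) + 2)) atTop atTop :=
    tendsto_atTop_add_const_right _ 2 tendsto_natCast_atTop_atTop
  have h3 : Tendsto (fun m : ℕ => Real.log ((m : ℝ) + 2) / ((m : ℝ) + 2)) atTop (𝓝 0) :=
    hlog.comp h2
  have h4 : Tendsto (fun m : ℕ => ((m : ℝ) + 2) / m) atTop (𝓝 1) := by
    have h5 : Tendsto (fun m : ℕ => 1 + 2 / (m : ℝ)) atTop (𝓝 (1 + 0)) :=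
      tendsto_const_nhds.add (tendsto_const_div_atTop_nhds_zero_nat 2)
    rw [add_zero] at h5
    apply h5.congr'
    filter_upwards [eventually_ge_atTop 1] with m hm
    have : (m : ℝ) ≠ 0 := by positivity
    field_simp
  have h6 := h3.mul h4
  rw [zero_mul] at h6
  apply h6.congr'
  filter_upwards [eventually_ge_atTop 1] with m hm
  have : (m : ℝ) ≠ 0 := by positivity
  field_simp

/-- If every pair in `D` is ordered (one way or the other), `entOf D α = 0`. -/
lemma entOf_eq_zero {D : Set (unitInterval × unitInterval)}
    (hD : (∀ p ∈ D, p.1 ≤ p.2) ∨ (∀ p ∈ D, p.2 ≤ p.1))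
    {α : Finset (Set unitInterval)} (hα : IsMinimalIntervalCover α) :
    entOf D α = 0 := by
  rw [entOf]
  split_ifs with h
  · -- the cover numbers are at most (m+2)^|α|
    have hcb : ∀ m : ℕ, coverNum (MahavierFin D m) (gridCover α (m + 1)) ≤ (m + 2) ^ α.card := by
      intro m
      apply coverNum_le_of_mono hα
      obtain hD | hD := hD
      · left
        intro x hx
        rw [Fin.monotone_iff_le_succ]
        intro i
        exact hD _ (hx i)
      · right
        intro x hx
        rw [Fin.antitone_iff_succ_le]
        intro i
        exact hD _ (hx i)
    apply Filter.Tendsto.limsup_eq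
    have h0 : (0 : ENNReal) = ENNReal.ofReal 0 := by simp
    rw [h0]
    apply ENNReal.tendsto_ofReal
    apply squeeze_zero
    · intro m
      apply div_nonneg _ (Nat.cast_nonneg m)
      rcases Nat.eq_zero_or_pos (coverNum (MahavierFin D m) (gridCover α (m + 1))) with hz | hz
      · simp [hz]
      · apply Real.log_nonneg
        exact_mod_cast hz
    · -- upper bound by (α.card) * log (m+2) / m
      intro m
      show _ ≤ (α.card : ℝ) * Real.log ((m : ℝ) + 2) / m
      rcases Nat.eq_zero_or_pos m with rfl | hm
      · simp
      · have hle : Real.log (coverNum (MahavierFin D m) (gridCover α (m + 1)))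
            ≤ (α.card : ℝ) * Real.log ((m : ℝ) + 2) := by
          have hlog2 : Real.log (((m + 2) ^ α.card : ℕ) : ℝ)
              = (α.card : ℝ) * Real.log ((m : ℝ) + 2) := by
            push_cast
            rw [Real.log_pow]
          rcases Nat.eq_zero_or_pos (coverNum (MahavierFin D m) (gridCover α (m + 1)))
              with hz | hz
          · rw [hz]
            simp only [Nat.cast_zero, Real.log_zero]
            rw [← hlog2]
            apply Real.log_nonneg
            have : (1 : ℕ) ≤ (m + 2) ^ α.card := Nat.one_le_pow _ _ (by omega)
            exact_mod_cast this
          · rw [← hlog2]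
            apply Real.log_le_log (by exact_mod_cast hz)
            exact_mod_cast hcb m
        apply div_le_div_of_nonneg_right hle
        positivity
    · -- the upper bound tends to 0
      have := tendsto_log_add_two_div.const_mul (α.card : ℝ)
      rw [mul_zero] at this
      apply this.congr
      intro m
      ring
  · rfl

/-- Basic interval of the uniform cover. -/
def coverI (N j : ℕ) : Set unitInterval := {x : unitInterval | |(x : ℝ) - (j : ℝ) / N| < 1 / N}

/-- The uniform cover of `[0,1]` with `N+1` intervals of radius `1/N`. -/
def coverA (N : ℕ) : Finset (Set unitInterval) := (Finset.range (N + 1)).image (coverI N)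

lemma coverA_minimal {N : ℕ} (hN : 1 ≤ N) : IsMinimalIntervalCover (coverA N) := by
  have hNR : (0 : ℝ) < N := by exact_mod_cast hN
  refine ⟨?_, ?_, ?_⟩
  · -- open and OrdConnected
    intro u hu
    rw [coverA, Finset.mem_image] at hu
    obtain ⟨j, _, rfl⟩ := hu
    constructor
    · have : coverI N j = Subtype.val ⁻¹' (Metric.ball ((j : ℝ) / N) (1 / N)) := by
        ext x
        simp [coverI, Metric.mem_ball, Real.dist_eq]
      rw [this]
      exact Metric.isOpen_ball.preimage continuous_subtype_val
    · constructor
      intro x hx y hy z hz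
      simp only [coverI, Set.mem_setOf_eq, abs_lt] at hx hy ⊢
      have h1 : (x : ℝ) ≤ z := hz.1
      have h2 : (z : ℝ) ≤ y := hz.2
      constructor <;> nlinarith [hx.1, hx.2, hy.1, hy.2]
  · -- covers
    apply Set.eq_univ_of_forall
    intro x
    set j : ℕ := ⌊(x : ℝ) * N⌋₊ with hj
    have hx0 : (0 : ℝ) ≤ x := x.2.1
    have hx1 : (x : ℝ) ≤ 1 := x.2.2
    have hjle : j ≤ N := by
      have : (x : ℝ) * N ≤ N := by nlinarith
      calc j ≤ ⌊(N : ℝ)⌋₊ := Nat.floor_le_floor this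
      _ = N := Nat.floor_natCast N
    have hfl : (j : ℝ) ≤ (x : ℝ) * N := Nat.floor_le (by positivity)
    have hfu : (x : ℝ) * N < j + 1 := Nat.lt_floor_add_one _
    refine ⟨coverI N j, ?_, ?_⟩
    · rw [coverA]
      simp only [Finset.coe_image, Set.mem_image, Finset.mem_coe]
      exact ⟨j, Finset.mem_range.mpr (by omega), rfl⟩
    · simp only [coverI, Set.mem_setOf_eq, abs_lt]
      constructor
      · have hd : (j : ℝ) / N ≤ x := by
          rw [div_le_iff₀ hNR]; linarith
        have hpos : (0:ℝ) < 1/N := by positivity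
        linarith
      · rw [sub_lt_iff_lt_add, ← add_div, lt_div_iff₀ hNR]
        linarith
  · -- minimal
    intro β hβ hcov
    apply Finset.Subset.antisymm hβ
    intro u hu
    rw [coverA, Finset.mem_image] at hu
    obtain ⟨j, hjN, rfl⟩ := hu
    rw [Finset.mem_range, Nat.lt_succ_iff] at hjN
    -- the point j/N lies only in coverI N j
    have hmem : ((j : ℝ) / N) ∈ Set.Icc (0 : ℝ) 1 := by
      constructor
      · positivity
      · rw [div_le_one hNR]
        exact_mod_cast hjN
    set q : unitInterval := ⟨(j : ℝ) / N, hmem⟩ with hq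
    have hqcov : q ∈ ⋃₀ (β : Set (Set unitInterval)) := hcov ▸ Set.mem_univ q
    obtain ⟨v, hv, hqv⟩ := hqcov
    have hvA := hβ (Finset.mem_coe.mp hv)
    rw [coverA, Finset.mem_image] at hvA
    obtain ⟨j', _, rfl⟩ := hvA
    have : j' = j := by
      simp only [coverI, Set.mem_setOf_eq, hq] at hqv
      rw [div_sub_div_same, abs_div, abs_of_pos hNR, div_lt_div_iff_of_pos_right hNR] at hqv
      have h1 : |(j : ℝ) - (j' : ℝ)| < 1 := hqv
      rw [abs_lt] at h1
      have h2 : (j : ℝ) < j' + 1 := by linarith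
      have h3 : (j' : ℝ) < j + 1 := by linarith
      have h2' : j < j' + 1 := by exact_mod_cast h2
      have h3' : j' < j + 1 := by exact_mod_cast h3
      omega
    rwa [this] at hv

/-- The cover numbers are always realized: some finite subfamily of the grid cover covers. -/
lemma coverNum_set_nonempty {α : Finset (Set unitInterval)} (hα : IsMinimalIntervalCover α)
    (k : ℕ) (K : Set (Fin k → unitInterval)) :
    {n | ∃ F : Finset (Set (Fin k → unitInterval)),
      ↑F ⊆ gridCover α k ∧ F.card = n ∧ K ⊆ ⋃₀ ↑F}.Nonempty := by
  classical
  refine ⟨_, Finset.univ.image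
    (fun f : Fin k → {u : Set unitInterval // u ∈ α} =>
      {y : Fin k → unitInterval | ∀ i, y i ∈ (f i).1}), ?_, rfl, ?_⟩
  · intro s hs
    simp only [Finset.coe_image, Set.mem_image, Finset.mem_coe] at hs
    obtain ⟨f, _, rfl⟩ := hs
    exact ⟨fun i => (f i).1, fun i => (f i).2, rfl⟩
  · intro x _
    have hex : ∀ i : Fin k, ∃ u : {u : Set unitInterval // u ∈ α}, x i ∈ u.1 := by
      intro i
      have hx : x i ∈ ⋃₀ (α : Set (Set unitInterval)) := hα.2.1 ▸ Set.mem_univ _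
      obtain ⟨u, hu, hxu⟩ := hx
      exact ⟨⟨u, Finset.mem_coe.mp hu⟩, hxu⟩
    choose g hg using hex
    refine ⟨{y : Fin k → unitInterval | ∀ i, y i ∈ (g i).1}, ?_, hg⟩
    simp only [Finset.coe_image, Set.mem_image, Finset.mem_coe]
    exact ⟨g, Finset.mem_univ _, rfl⟩

/-- Members of the uniform cover have diameter less than `2/N`. -/
lemma coverI_diam {N j : ℕ} {x y : unitInterval} (hx : x ∈ coverI N j) (hy : y ∈ coverI N j) :
    |(x : ℝ) - (y : ℝ)| < 2 / N := by
  simp only [coverI, Set.mem_setOf_eq] at hx hy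
  calc |(x : ℝ) - (y : ℝ)| ≤ |(x : ℝ) - (j : ℝ) / N| + |(j : ℝ) / N - (y : ℝ)| :=
        abs_sub_le _ _ _
  _ < 1 / N + 1 / N := add_lt_add hx (abs_sub_comm ((j : ℝ) / N) (y : ℝ) ▸ hy)
  _ = 2 / N := by ring

lemma ent_eq_top_of_square {D : Set (unitInterval × unitInterval)} (a b : ℝ)
    (ha : 0 ≤ a) (hab : a < b) (hb : b ≤ 1)
    (hsq : ∀ x y : unitInterval, (x : ℝ) ∈ Set.Icc a b → (y : ℝ) ∈ Set.Icc a b → (x, y) ∈ D) :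
    ent D = ⊤ := by
  classical
  have hba : 0 < b - a := by linarith
  have key : ∀ n : ℕ, 1 ≤ n → ENNReal.ofReal (Real.log ((n : ℝ) + 1)) ≤ ent D := by
    intro n hn
    have hnR : (0 : ℝ) < n := by exact_mod_cast hn
    obtain ⟨N, hNgt⟩ := exists_nat_gt (2 * n / (b - a))
    have hNpos : (0 : ℝ) < N := lt_of_le_of_lt (by positivity) hNgt
    have hN1 : 1 ≤ N := by exact_mod_cast Nat.one_le_iff_ne_zero.mpr (by
      intro h; rw [h] at hNpos; simp at hNpos)
    set gap : ℝ := (b - a) / n with hgap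
    have hgappos : 0 < gap := by rw [hgap]; positivity
    have hng : (n : ℝ) * gap = b - a := by rw [hgap]; field_simp
    have hmesh : 2 / (N : ℝ) < gap := by
      rw [hgap, div_lt_div_iff₀ hNpos hnR]
      rw [div_lt_iff₀ hba] at hNgt
      nlinarith
    -- the grid points
    have hqmem : ∀ j : Fin (n + 1), a + (j : ℝ) * gap ∈ Set.Icc (0 : ℝ) 1 := by
      intro j
      have hj : (j : ℝ) ≤ n := by exact_mod_cast Nat.lt_succ_iff.mp j.2
      constructor
      · positivity
      · nlinarith
    set q : Fin (n + 1) → unitInterval := fun j => ⟨a + (j : ℝ) * gap, hqmem j⟩ with hqdef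
    have hqIcc : ∀ j : Fin (n + 1), ((q j : ℝ)) ∈ Set.Icc a b := by
      intro j
      have hj : (j : ℝ) ≤ n := by exact_mod_cast Nat.lt_succ_iff.mp j.2
      have hj0 : (0 : ℝ) ≤ (j : ℝ) := by positivity
      constructor
      · simp only [hqdef]; nlinarith
      · simp only [hqdef]; nlinarith
    have hqsep : ∀ j j' : Fin (n + 1), j ≠ j' → gap ≤ |(q j : ℝ) - (q j' : ℝ)| := by
      intro j j' hjj
      have heq : (q j : ℝ) - (q j' : ℝ) = ((j : ℝ) - (j' : ℝ)) * gap := by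
        simp only [hqdef]; ring
      rw [heq, abs_mul, abs_of_pos hgappos]
      have h1 : (1 : ℝ) ≤ |(j : ℝ) - (j' : ℝ)| := by
        have hne : ((j : ℕ) : ℝ) ≠ ((j' : ℕ) : ℝ) := by
          intro h
          exact hjj (Fin.ext (by exact_mod_cast h))
        obtain ⟨z, hz⟩ : ∃ z : ℤ, ((j : ℝ) - (j' : ℝ)) = z :=
          ⟨(j : ℤ) - (j' : ℤ), by push_cast; ring⟩
        rw [hz]
        have hz0 : z ≠ 0 := by
          intro h
          rw [h] at hz
          apply hne
          push_cast at hz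
          linarith
        have : 1 ≤ |z| := Int.one_le_abs hz0
        calc (1 : ℝ) = ((1 : ℤ) : ℝ) := by norm_num
        _ ≤ ((|z| : ℤ) : ℝ) := by exact_mod_cast this
        _ = |(z : ℝ)| := by push_cast; simp
      nlinarith
    have hqinj : Function.Injective q := by
      intro j j' h
      by_contra hjj
      have := hqsep j j' hjj
      rw [h, sub_self, abs_zero] at this
      linarith
    -- lower bound on cover numbers
    have hlow : ∀ m : ℕ, (n + 1) ^ (m + 1) ≤
        coverNum (MahavierFin D m) (gridCover (coverA N) (m + 1)) := by
      intro m
      have hSne := coverNum_set_nonempty (coverA_minimal hN1) (m + 1) (MahavierFin D m)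
      obtain ⟨F, hFsub, hFcard, hFcov⟩ := Nat.sInf_mem hSne
      set P : Finset (Fin (m + 1) → unitInterval) :=
        Finset.univ.image (fun g : Fin (m + 1) → Fin (n + 1) => fun i => q (g i)) with hP
      have hPcard : P.card = (n + 1) ^ (m + 1) := by
        rw [hP, Finset.card_image_of_injective _ (fun g g' h => by
          funext i; exact hqinj (congrFun h i))]
        simp [Fintype.card_fun]
      have hPsub : ↑P ⊆ MahavierFin D m := by
        intro x hx
        simp only [hP, Finset.coe_image, Set.mem_image, Finset.mem_coe] at hx
        obtain ⟨g, _, rfl⟩ := hx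
        intro i
        exact hsq _ _ (hqIcc _) (hqIcc _)
      have hchoice : ∀ x ∈ P, ∃ u ∈ F, x ∈ u := by
        intro x hx
        obtain ⟨u, hu, hxu⟩ := hFcov (hPsub hx)
        exact ⟨u, Finset.mem_coe.mp hu, hxu⟩
      choose φ hφ1 hφ2 using hchoice
      have hcard : P.card ≤ F.card := by
        apply Finset.card_le_card_of_injOn (fun x => if hx : x ∈ P then φ x hx else ∅)
        · intro x hx
          simp only [Finset.mem_coe] at hx
          simp only [dif_pos hx]
          exact hφ1 x hx
        · intro x hx y hy hxy
          simp only [Finset.mem_coe] at hx hy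
          simp only [dif_pos hx, dif_pos hy] at hxy
          by_contra hne
          have hu := hFsub (Finset.mem_coe.mpr (hφ1 x hx))
          obtain ⟨f, hf, hfeq⟩ := hu
          have hxin : x ∈ {z : Fin (m + 1) → unitInterval | ∀ i, z i ∈ f i} :=
            hfeq ▸ hφ2 x hx
          have hyin : y ∈ {z : Fin (m + 1) → unitInterval | ∀ i, z i ∈ f i} := by
            rw [← hfeq, hxy]
            exact hφ2 y hy
          obtain ⟨g, -, rfl⟩ := by
            simpa only [hP, Finset.mem_image, Finset.mem_univ, true_and] using hx
          obtain ⟨g', -, rfl⟩ := by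
            simpa only [hP, Finset.mem_image, Finset.mem_univ, true_and] using hy
          have hgg : g ≠ g' := by intro h; exact hne (by rw [h])
          obtain ⟨i, hi⟩ := Function.ne_iff.mp hgg
          have hsep := hqsep (g i) (g' i) hi
          have hfi := hf i
          rw [coverA, Finset.mem_image] at hfi
          obtain ⟨j, -, hj⟩ := hfi
          have hxI : q (g i) ∈ coverI N j := by rw [hj]; exact hxin i
          have hyI : q (g' i) ∈ coverI N j := by rw [hj]; exact hyin i
          have hdiam := coverI_diam hxI hyI
          linarith
      calc (n + 1) ^ (m + 1) = P.card := hPcard.symm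
      _ ≤ F.card := hcard
      _ = coverNum (MahavierFin D m) (gridCover (coverA N) (m + 1)) := hFcard
    -- entropy relative to this cover is at least log (n+1)
    have hMne : (MahavierInf D).Nonempty := by
      refine ⟨fun _ => ⟨a, ⟨ha, le_trans hab.le hb⟩⟩, ?_⟩
      intro i
      exact hsq _ _ ⟨le_refl a, hab.le⟩ ⟨le_refl a, hab.le⟩
    have hent : ENNReal.ofReal (Real.log ((n : ℝ) + 1)) ≤ entOf D (coverA N) := by
      rw [entOf, if_pos hMne]
      have hev : ∀ᶠ m : ℕ in atTop,
          ENNReal.ofReal (Real.log ((n : ℝ) + 1)) ≤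
          ENNReal.ofReal
            (Real.log (coverNum (MahavierFin D m) (gridCover (coverA N) (m + 1))) / m) := by
        filter_upwards [eventually_ge_atTop 1] with m hm
        apply ENNReal.ofReal_le_ofReal
        have hmR : (0 : ℝ) < m := by exact_mod_cast hm
        have hlogle : ((m : ℝ) + 1) * Real.log ((n : ℝ) + 1)
            ≤ Real.log (coverNum (MahavierFin D m) (gridCover (coverA N) (m + 1))) := by
          have hcast : (((n + 1) ^ (m + 1) : ℕ) : ℝ) = ((n : ℝ) + 1) ^ (m + 1) := by push_cast; ring
          calc ((m : ℝ) + 1) * Real.log ((n : ℝ) + 1)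
              = Real.log (((n : ℝ) + 1) ^ (m + 1)) := by
                rw [Real.log_pow]; push_cast; ring
          _ ≤ _ := by
              rw [← hcast]
              apply Real.log_le_log (by positivity)
              exact_mod_cast hlow m
        have hlognn : 0 ≤ Real.log ((n : ℝ) + 1) := Real.log_nonneg (by linarith)
        rw [le_div_iff₀ hmR]
        nlinarith
      calc ENNReal.ofReal (Real.log ((n : ℝ) + 1))
          = Filter.limsup (fun _ : ℕ => ENNReal.ofReal (Real.log ((n : ℝ) + 1))) atTop :=
            (Filter.limsup_const _).symm
      _ ≤ _ := Filter.limsup_le_limsup hev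
    calc ENNReal.ofReal (Real.log ((n : ℝ) + 1)) ≤ entOf D (coverA N) := hent
    _ ≤ ent D := le_iSup
        (fun α : {α : Finset (Set unitInterval) // IsMinimalIntervalCover α} => entOf D α.1)
        ⟨coverA N, coverA_minimal hN1⟩
  -- conclude
  by_contra hne
  obtain ⟨nn, hnn⟩ := exists_nat_ge (Real.exp ((ent D).toReal))
  have h1 : 1 ≤ nn := by
    by_contra h
    push_neg at h
    have hn0 : nn = 0 := by omega
    rw [hn0] at hnn
    simp only [Nat.cast_zero] at hnn
    linarith [Real.exp_pos ((ent D).toReal)]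
  have h2 := key nn h1
  rw [ENNReal.ofReal_le_iff_le_toReal hne] at h2
  have h3 : Real.exp ((ent D).toReal) < (nn : ℝ) + 1 := by linarith
  have h4 := (Real.lt_log_iff_exp_lt (by positivity)).mpr h3
  linarith

/-- If `D ⊆ [0,1]²` is closed with nonempty connected interior and
`D = closure(interior D)`, then `ent(D)` is either `0` or `∞`. -/
theorem ent_closed_region_zero_or_top
    (D : Set (unitInterval × unitInterval)) (hDcl : IsClosed D)
    (hne : (interior D).Nonempty) (hconn : IsConnected (interior D))
    (hreg : D = closure (interior D)) :
    ent D = 0 ∨ ent D = ⊤ := by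
  classical
  have hcont : Continuous (fun p : unitInterval × unitInterval => (p.1 : ℝ) - (p.2 : ℝ)) := by
    fun_prop
  by_cases hdiag : ∃ p ∈ interior D, (p.1 : ℝ) = (p.2 : ℝ)
  · right
    obtain ⟨p, hp, hpeq⟩ := hdiag
    have hp2 : p.2 = p.1 := Subtype.ext hpeq.symm
    obtain ⟨U, V, hU, hV, hpU, hpV, hUV⟩ := isOpen_prod_iff.mp isOpen_interior p.1 p.2 hp
    have hcV : p.1 ∈ V := hp2 ▸ hpV
    have hW : IsOpen (U ∩ V) := hU.inter hV
    have hcW : p.1 ∈ U ∩ V := ⟨hpU, hcV⟩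
    obtain ⟨O, hO, hOW⟩ := isOpen_induced_iff.mp hW
    have hcO : ((p.1 : ℝ)) ∈ O := by
      rw [← hOW] at hcW
      exact hcW
    obtain ⟨ε, hε, hball⟩ := Metric.isOpen_iff.mp hO _ hcO
    set c : ℝ := (p.1 : ℝ) with hc
    have hc0 : 0 ≤ c := p.1.2.1
    have hc1 : c ≤ 1 := p.1.2.2
    set a : ℝ := max 0 (c - ε / 2) with hadef
    set b : ℝ := min 1 (c + ε / 2) with hbdef
    have ha : 0 ≤ a := le_max_left _ _
    have hb : b ≤ 1 := min_le_left _ _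
    have hab : a < b := by
      rw [hadef, hbdef, lt_min_iff]
      constructor
      · rw [max_lt_iff]
        exact ⟨by norm_num, by linarith⟩
      · rw [max_lt_iff]
        exact ⟨by linarith, by linarith⟩
    apply ent_eq_top_of_square a b ha hab hb
    intro x y hx hy
    have hmem : ∀ z : unitInterval, (z : ℝ) ∈ Set.Icc a b → z ∈ U ∩ V := by
      intro z hz
      have h1 : c - ε / 2 ≤ (z : ℝ) := le_trans (le_max_right _ _) hz.1
      have h2 : (z : ℝ) ≤ c + ε / 2 := le_trans hz.2 (min_le_right _ _)
      have hzb : (z : ℝ) ∈ Metric.ball c ε := by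
        rw [Metric.mem_ball, Real.dist_eq, abs_lt]
        constructor <;> linarith
      have : (z : ℝ) ∈ O := hball hzb
      rw [← hOW]
      exact this
    have hxW := hmem x hx
    have hyW := hmem y hy
    exact interior_subset (hUV (Set.mk_mem_prod hxW.1 hyW.2))
  · left
    -- D lies (weakly) on one side of the diagonal
    obtain ⟨p0, hp0⟩ := hne
    have hne0 : ∀ p ∈ interior D, (p.1 : ℝ) - (p.2 : ℝ) ≠ 0 := by
      intro p hp h
      exact hdiag ⟨p, hp, by linarith⟩
    have hcases : (∀ p ∈ interior D, (p.1 : ℝ) < p.2) ∨ (∀ p ∈ interior D, (p.2 : ℝ) < p.1) := by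
      rcases lt_or_gt_of_ne (hne0 p0 hp0) with h0 | h0
      · left
        intro p hp
        by_contra hcon
        push_neg at hcon
        have hpos : 0 < (p.1 : ℝ) - p.2 :=
          lt_of_le_of_ne (by linarith) (Ne.symm (hne0 p hp))
        have hIcc := hconn.isPreconnected.intermediate_value hp0 hp hcont.continuousOn
        obtain ⟨r, hr, hr0⟩ := hIcc (show (0:ℝ) ∈ Set.Icc _ _ from ⟨by linarith, by linarith⟩)
        simp only at hr0
        exact hdiag ⟨r, hr, by linarith⟩
      · right
        intro p hp
        by_contra hcon
        push_neg at hcon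
        have hpos : 0 < (p.2 : ℝ) - p.1 :=
          lt_of_le_of_ne (by linarith) (by
            intro h
            exact hne0 p hp (by linarith))
        have hIcc := hconn.isPreconnected.intermediate_value hp hp0 hcont.continuousOn
        obtain ⟨r, hr, hr0⟩ := hIcc (show (0:ℝ) ∈ Set.Icc _ _ from ⟨by linarith, by linarith⟩)
        simp only at hr0
        exact hdiag ⟨r, hr, by linarith⟩
    have hDord : (∀ p ∈ D, p.1 ≤ p.2) ∨ (∀ p ∈ D, p.2 ≤ p.1) := by
      rcases hcases with hcase | hcase
      · left
        have hcl : IsClosed {p : unitInterval × unitInterval | (p.1 : ℝ) ≤ p.2} := by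
          apply isClosed_le <;> fun_prop
        have hsub : D ⊆ {p : unitInterval × unitInterval | (p.1 : ℝ) ≤ p.2} := by
          rw [hreg]
          apply closure_minimal _ hcl
          intro p hp
          exact (hcase p hp).le
        intro p hp
        exact Subtype.coe_le_coe.mp (hsub hp)
      · right
        have hcl : IsClosed {p : unitInterval × unitInterval | (p.2 : ℝ) ≤ p.1} := by
          apply isClosed_le <;> fun_prop
        have hsub : D ⊆ {p : unitInterval × unitInterval | (p.2 : ℝ) ≤ p.1} := by
          rw [hreg]
          apply closure_minimal _ hcl
          intro p hp
          exact (hcase p hp).le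
        intro p hp
        exact Subtype.coe_le_coe.mp (hsub hp)
    have hall : ∀ αp : {α : Finset (Set unitInterval) // IsMinimalIntervalCover α},
        entOf D αp.1 = 0 := fun αp => entOf_eq_zero hDord αp.2
    exact le_antisymm (iSup_le fun αp => le_of_eq (hall αp)) zero_le
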